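/- For m>0 and ρ>0 let ν^{(m)}_ρ(n) = (1−φ)^{m/2} φ^n Γ(m/2+n)/(n! Γ(m/2)) with φ = ρ/(m/2+ρ). Then: (i) 1 − ν^{(m)}_ρ(0) = −(m/2)(log m)(1 + o(1)) as m→0, i.e. (1 − ν^{(m)}_ρ(0))/(−(m/2)log m) → 1; (ii) for every fixed n≥1, |log m| · ν^{(m)}_ρ(n)/(1 − ν^{(m)}_ρ(0)) → 1/n as m→0; i.e. the distribution of a site conditioned to be non-empty, multiplied by |log m|, converges pointwise to the (non-normalizable) limit 1/n. -/

import Mathlib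

open Filter Topology

lemma gamma_prod (x : ℝ) (hx : 0 < x) (n : ℕ) :
    Real.Gamma (x + n) = (∏ k ∈ Finset.range n, (x + k)) * Real.Gamma x := by
  induction n with
  | zero => simp
  | succ n ih =>
    have h1 : x + ((n+1 : ℕ) : ℝ) = (x + n) + 1 := by push_cast; ring
    rw [h1, Real.Gamma_add_one (by positivity), ih, Finset.prod_range_succ]
    push_cast
    ring

/-- The single-site marginal `ν^{(m)}_ρ(n) = (1−φ)^{m/2} φ^n Γ(m/2+n)/(n! Γ(m/2))`
with `φ = ρ/(m/2+ρ)` of the homogeneous stationary measure of the SIP at density `ρ`. -/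
noncomputable def nuSIP (m ρ : ℝ) (n : ℕ) : ℝ :=
  (1 - ρ / (m / 2 + ρ)) ^ (m / 2) * (ρ / (m / 2 + ρ)) ^ n *
    Real.Gamma (m / 2 + n) / (n.factorial * Real.Gamma (m / 2))

/-- **Degenerate conditional distribution of a non-empty site as `m → 0`**:
(i) `1 − ν^{(m)}_ρ(0) = −(m/2)(log m)(1+o(1))`; (ii) for every fixed `n ≥ 1`,
`|log m| ν^{(m)}_ρ(n)/(1 − ν^{(m)}_ρ(0)) → 1/n`. -/
theorem sip_conditional_degenerate
    (ρ : ℝ) (hρ : 0 < ρ) :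
    Tendsto (fun m : ℝ => (1 - nuSIP m ρ 0) / (-(m / 2) * Real.log m))
      (𝓝[>] 0) (𝓝 1) ∧
    (∀ n : ℕ, 1 ≤ n →
      Tendsto (fun m : ℝ => |Real.log m| * (nuSIP m ρ n / (1 - nuSIP m ρ 0)))
        (𝓝[>] 0) (𝓝 (1 / n))) := by
  set g : ℝ → ℝ := fun m => Real.log (m / (m + 2*ρ)) * (m / 2) with hg_def
  -- base rpow formula
  have hbase : ∀ m : ℝ, 0 < m →
      (1 - ρ / (m / 2 + ρ)) ^ (m / 2) = Real.exp (g m) := by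
    intro m hm
    have h1 : (0:ℝ) < m/2 + ρ := by linarith
    have h4 : (0:ℝ) < m + 2*ρ := by linarith
    have h2 : (1 : ℝ) - ρ/(m/2+ρ) = m/(m+2*ρ) := by
      field_simp [h1.ne', h4.ne']
      ring
    have h3 : 0 < m/(m+2*ρ) := by positivity
    rw [h2, Real.rpow_def_of_pos h3]
  -- nuSIP at 0
  have hν0 : ∀ m : ℝ, 0 < m → nuSIP m ρ 0 = Real.exp (g m) := by
    intro m hm
    have hΓ : Real.Gamma (m/2) ≠ 0 := (Real.Gamma_pos_of_pos (by linarith)).ne'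
    simp only [nuSIP, pow_zero, Nat.cast_zero, add_zero, Nat.factorial_zero,
      Nat.cast_one, one_mul, mul_one, mul_div_assoc, div_self hΓ, hbase m hm]
  -- g is negative on (0,∞)
  have hgneg : ∀ m : ℝ, 0 < m → g m < 0 := by
    intro m hm
    have h4 : (0:ℝ) < m + 2*ρ := by linarith
    have hlt : m / (m + 2*ρ) < 1 := (div_lt_one h4).mpr (by linarith)
    have := Real.log_neg (by positivity) hlt
    have : Real.log (m / (m + 2*ρ)) * (m/2) < 0 :=
      mul_neg_of_neg_of_pos this (by linarith)
    simpa [hg_def] using this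
  -- g tends to 0
  have hg0 : Tendsto g (𝓝[>] 0) (𝓝 0) := by
    have h1 : Tendsto (fun m : ℝ => Real.log m * m) (𝓝[>] 0) (𝓝 0) := by
      have := tendsto_log_mul_rpow_nhdsGT_zero (r := 1) one_pos
      simpa [Real.rpow_one] using this
    have h2 : Tendsto (fun m : ℝ => Real.log (m + 2*ρ) * m) (𝓝[>] 0) (𝓝 0) := by
      have hc : Tendsto (fun m : ℝ => Real.log (m + 2*ρ)) (𝓝[>] 0) (𝓝 (Real.log (2*ρ))) := by
        have : ContinuousAt (fun m : ℝ => Real.log (m + 2*ρ)) 0 :=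
          (Real.continuousAt_log (by positivity)).comp (by fun_prop)
        have h := this.tendsto.mono_left (nhdsWithin_le_nhds (s := Set.Ioi (0:ℝ)))
        simpa using h
      have hid : Tendsto (fun m : ℝ => m) (𝓝[>] 0) (𝓝 0) :=
        tendsto_id.mono_left nhdsWithin_le_nhds
      simpa using hc.mul hid
    have key : Tendsto (fun m : ℝ => (Real.log m - Real.log (m + 2*ρ)) * (m/2))
        (𝓝[>] 0) (𝓝 0) := by
      have := (h1.sub h2).div_const 2
      simpa [sub_mul, mul_div_assoc] using this.congr (fun m => by ring)
    refine key.congr' ?_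
    filter_upwards [self_mem_nhdsWithin] with m hm
    have hm' : (0:ℝ) < m := hm
    rw [hg_def]
    simp only
    rw [Real.log_div hm'.ne' (show m + 2*ρ ≠ 0 by positivity)]
  -- g tends to 0 within the punctured neighborhood
  have hg0' : Tendsto g (𝓝[>] 0) (𝓝[≠] 0) := by
    apply tendsto_nhdsWithin_of_tendsto_nhds_of_eventually_within _ hg0
    filter_upwards [self_mem_nhdsWithin] with m hm
    exact (hgneg m hm).ne
  -- slope of exp at 0
  have hslope : Tendsto (fun m => (Real.exp (g m) - 1) / g m) (𝓝[>] 0) (𝓝 1) := by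
    have h := hasDerivAt_iff_tendsto_slope.mp (Real.hasDerivAt_exp 0)
    rw [Real.exp_zero] at h
    have h2 := h.comp hg0'
    refine h2.congr fun m => ?_
    simp [slope_def_field, Function.comp]
  -- continuity of log (m + 2ρ)
  have hc : Tendsto (fun m : ℝ => Real.log (m + 2*ρ)) (𝓝[>] 0) (𝓝 (Real.log (2*ρ))) := by
    have h : ContinuousAt (fun m : ℝ => Real.log (m + 2*ρ)) 0 :=
      (Real.continuousAt_log (by positivity)).comp (by fun_prop)
    have h2 := h.tendsto.mono_left (nhdsWithin_le_nhds (s := Set.Ioi (0:ℝ)))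
    simpa using h2
  -- second factor
  have hB : Tendsto (fun m : ℝ => 1 - Real.log (m + 2*ρ) / Real.log m) (𝓝[>] 0) (𝓝 1) := by
    have hinv : Tendsto (fun m : ℝ => (Real.log m)⁻¹) (𝓝[>] 0) (𝓝 0) := by
      have h1 : Tendsto (fun m : ℝ => -Real.log m) (𝓝[>] 0) atTop :=
        tendsto_neg_atTop_iff.mpr Real.tendsto_log_nhdsGT_zero
      have h2 := h1.inv_tendsto_atTop
      have h3 := h2.neg
      rw [neg_zero] at h3
      refine h3.congr fun m => ?_
      rw [Pi.inv_apply, inv_neg, neg_neg]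
    have h4 := hc.mul hinv
    rw [mul_zero] at h4
    have h5 := (tendsto_const_nhds (x := (1:ℝ)) (f := 𝓝[>] (0:ℝ))).sub h4
    rw [sub_zero] at h5
    exact h5.congr fun m => by rw [div_eq_mul_inv]
  -- Part (i)
  have hI : Tendsto (fun m : ℝ => (1 - nuSIP m ρ 0) / (-(m / 2) * Real.log m))
      (𝓝[>] 0) (𝓝 1) := by
    have hmul := hslope.mul hB
    rw [mul_one] at hmul
    refine hmul.congr' ?_
    filter_upwards [Ioo_mem_nhdsGT (one_pos : (0:ℝ) < 1)]
      with m hm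
    obtain ⟨hm0, hm1⟩ := hm
    have hloglt : Real.log m < 0 := Real.log_neg hm0 hm1
    have h4 : (0:ℝ) < m + 2*ρ := by linarith
    have hlogdiv : Real.log (m/(m+2*ρ)) = Real.log m - Real.log (m+2*ρ) :=
      Real.log_div hm0.ne' h4.ne'
    have hgne : g m ≠ 0 := (hgneg m hm0).ne
    rw [hν0 m hm0]
    simp only [hg_def] at hgne ⊢
    rw [hlogdiv] at hgne ⊢
    have h5 : Real.log m ≠ 0 := hloglt.ne
    have hab : Real.log m - Real.log (m+2*ρ) ≠ 0 := (mul_ne_zero_iff.mp hgne).1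
    have hsub : 1 - Real.log (m+2*ρ)/Real.log m
        = (Real.log m - Real.log (m+2*ρ))/Real.log m := by
      field_simp
    have hx2 : (m/2 : ℝ) ≠ 0 := by positivity
    rw [hsub, div_mul_div_comm,
      div_eq_div_iff (mul_ne_zero (mul_ne_zero hab hx2) h5)
        (mul_ne_zero (neg_ne_zero.mpr hx2) h5)]
    ring
  refine ⟨hI, ?_⟩
  intro n hn
  obtain ⟨j, rfl⟩ : ∃ j, n = j + 1 := ⟨n - 1, (Nat.succ_pred_eq_of_pos hn).symm⟩
  -- P part
  have hP : Tendsto (fun m : ℝ => Real.exp (g m) * (ρ/(m/2+ρ))^(j+1) *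
      (∏ k ∈ Finset.range j, (m/2+1+(k:ℝ))) / ((j+1).factorial : ℝ))
      (𝓝[>] 0) (𝓝 (1 / ((j+1 : ℕ) : ℝ))) := by
    have h1 : Tendsto (fun m : ℝ => Real.exp (g m)) (𝓝[>] 0) (𝓝 1) := by
      have h := (Real.continuous_exp.continuousAt (x := (0:ℝ))).tendsto.comp hg0
      simpa [Function.comp_def] using h
    have h2 : Tendsto (fun m : ℝ => (ρ/(m/2+ρ))^(j+1)) (𝓝[>] 0) (𝓝 1) := by
      have hca : ContinuousAt (fun m : ℝ => (ρ/(m/2+ρ))^(j+1)) 0 := by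
        apply ContinuousAt.pow
        exact ContinuousAt.div continuousAt_const (by fun_prop) (by norm_num [hρ.ne'])
      have h := hca.tendsto.mono_left (nhdsWithin_le_nhds (s := Set.Ioi (0:ℝ)))
      simpa [hρ.ne'] using h
    have h3 : Tendsto (fun m : ℝ => ∏ k ∈ Finset.range j, (m/2+1+(k:ℝ)))
        (𝓝[>] 0) (𝓝 (j.factorial : ℝ)) := by
      have hcont : Continuous (fun m : ℝ => ∏ k ∈ Finset.range j, (m/2+1+(k:ℝ))) := by
        fun_prop
      have h := (hcont.continuousAt (x := (0:ℝ))).tendsto.mono_left (nhdsWithin_le_nhds (s := Set.Ioi (0:ℝ)))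
      have hval : (∏ k ∈ Finset.range j, ((0:ℝ)/2+1+(k:ℝ))) = (j.factorial : ℝ) := by
        calc (∏ k ∈ Finset.range j, ((0:ℝ)/2+1+(k:ℝ)))
            = ∏ k ∈ Finset.range j, ((k+1 : ℕ) : ℝ) :=
              Finset.prod_congr rfl fun k _ => by push_cast; ring
          _ = ((∏ k ∈ Finset.range j, (k+1) : ℕ) : ℝ) := by rw [Nat.cast_prod]
          _ = (j.factorial : ℝ) := by rw [Finset.prod_range_add_one_eq_factorial]
      rwa [hval] at h
    have h4 := ((h1.mul h2).mul h3).div_const ((j+1).factorial : ℝ)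
    have hval2 : (1:ℝ) * 1 * (j.factorial : ℝ) / ((j+1).factorial : ℝ)
        = 1 / ((j+1 : ℕ) : ℝ) := by
      rw [Nat.factorial_succ]
      have hj : (j.factorial : ℝ) ≠ 0 := Nat.cast_ne_zero.mpr j.factorial_ne_zero
      push_cast
      field_simp
    rwa [hval2] at h4
  -- Q part
  have hQ : Tendsto (fun m : ℝ => (-(m/2) * Real.log m) / (1 - nuSIP m ρ 0))
      (𝓝[>] 0) (𝓝 1) := by
    have h := hI.inv₀ one_ne_zero
    rw [inv_one] at h
    exact h.congr fun m => by rw [inv_div]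
  have hfin := hP.mul hQ
  rw [mul_one] at hfin
  refine hfin.congr' ?_
  filter_upwards [Ioo_mem_nhdsGT (one_pos : (0:ℝ) < 1)]
    with m hm
  obtain ⟨hm0, hm1⟩ := hm
  have hx : (0:ℝ) < m/2 := by linarith
  have hΓ : 0 < Real.Gamma (m/2) := Real.Gamma_pos_of_pos hx
  have hpos : 0 < 1 - nuSIP m ρ 0 := by
    rw [hν0 m hm0]
    have := Real.exp_lt_one_iff.mpr (hgneg m hm0)
    linarith
  have habs : |Real.log m| = -Real.log m := abs_of_neg (Real.log_neg hm0 hm1)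
  have hGam : Real.Gamma (m/2 + ((j+1:ℕ):ℝ))
      = (m/2) * (∏ k ∈ Finset.range j, (m/2+1+(k:ℝ))) * Real.Gamma (m/2) := by
    rw [gamma_prod _ hx, Finset.prod_range_succ']
    have hprod : (∏ k ∈ Finset.range j, (m/2 + ((k+1:ℕ):ℝ)))
        = ∏ k ∈ Finset.range j, (m/2+1+(k:ℝ)) :=
      Finset.prod_congr rfl fun k _ => by push_cast; ring
    rw [hprod]
    push_cast
    ring
  have hfact : ((j+1).factorial : ℝ) ≠ 0 := Nat.cast_ne_zero.mpr (j+1).factorial_ne_zero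
  show _ = |Real.log m| * (nuSIP m ρ (j+1) / (1 - nuSIP m ρ 0))
  rw [hν0 m hm0]
  simp only [nuSIP]
  rw [hbase m hm0, hGam, habs]
  rw [hν0 m hm0] at hpos
  field_simp
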